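/- Let ε ∈ ℝ and q ∈ ℝ with cos(πq) ≠ 0 and set α := 1 − πε/cos²(πq). If |α| > 1, then the eigenvalues of J_ε(q) are γ₊ = α + √(α² − 1) and γ₋ = α − √(α² − 1), their product is 1, and moreover: if α > 1 (which holds for all such q whenever ε < 0) then γ₊ > 1, while if α < −1 (which holds for all such q whenever ε > 2/π) then |γ₋| > 1. -/

import Mathlib

open Real

/-- The Jacobian matrix of the map `T̃_ε` at a point with angle coordinate `q`. -/
noncomputable def Jmat (ε q : ℝ) : Matrix (Fin 2) (Fin 2) ℝ :=
  !![0, 1; -1, 2 - 2 * Real.pi * ε / (Real.cos (Real.pi * q))^2]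

theorem stmt5 (ε q : ℝ) (hq : Real.cos (Real.pi * q) ≠ 0)
    (α : ℝ) (hα : α = 1 - Real.pi * ε / (Real.cos (Real.pi * q))^2) (h1 : 1 < |α|) :
    (∃ v : Fin 2 → ℝ, v ≠ 0 ∧ (Jmat ε q).mulVec v = (α + Real.sqrt (α^2 - 1)) • v) ∧
    (∃ v : Fin 2 → ℝ, v ≠ 0 ∧ (Jmat ε q).mulVec v = (α - Real.sqrt (α^2 - 1)) • v) ∧
    (∀ γ : ℝ, (∃ v : Fin 2 → ℝ, v ≠ 0 ∧ (Jmat ε q).mulVec v = γ • v) →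
        γ = α + Real.sqrt (α^2 - 1) ∨ γ = α - Real.sqrt (α^2 - 1)) ∧
    (α + Real.sqrt (α^2 - 1)) * (α - Real.sqrt (α^2 - 1)) = 1 ∧
    (ε < 0 → 1 < α) ∧
    (2 / Real.pi < ε → α < -1) ∧
    (1 < α → 1 < α + Real.sqrt (α^2 - 1)) ∧
    (α < -1 → 1 < |α - Real.sqrt (α^2 - 1)|) := by
  have hc2 : (0:ℝ) < (Real.cos (Real.pi * q))^2 := by positivity
  have hα2 : 1 < α ^ 2 := by nlinarith [sq_abs α, abs_nonneg α]
  set s := Real.sqrt (α^2 - 1) with hs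
  have hs2 : s ^ 2 = α ^ 2 - 1 := Real.sq_sqrt (by linarith)
  have hs0 : 0 < s := Real.sqrt_pos.mpr (by linarith)
  have h2α : 2 - 2 * Real.pi * ε / (Real.cos (Real.pi * q))^2 = 2 * α := by
    rw [hα]; field_simp
  have key : ∀ γ : ℝ, γ ^ 2 = 2 * α * γ - 1 →
      (Jmat ε q).mulVec ![1, γ] = γ • ![1, γ] := by
    intro γ hγ
    funext i
    fin_cases i <;>
      simp [Jmat, Matrix.mulVec, dotProduct, Fin.sum_univ_two, h2α] <;>
      nlinarith [hγ]
  have hne : (![1, (0:ℝ)] : Fin 2 → ℝ) ≠ 0 → True := fun _ => trivial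
  refine ⟨⟨![1, α + s], ?_, key _ (by nlinarith)⟩,
      ⟨![1, α - s], ?_, key _ (by nlinarith)⟩, ?_, by nlinarith, ?_, ?_, ?_, ?_⟩
  · intro h
    have := congrFun h 0
    simp at this
  · intro h
    have := congrFun h 0
    simp at this
  · rintro γ ⟨v, hv, hev⟩
    have h0 := congrFun hev 0
    have h1' := congrFun hev 1
    simp [Jmat, Matrix.mulVec, dotProduct, Fin.sum_univ_two, h2α] at h0 h1'
    have hv0 : v 0 ≠ 0 := by
      intro hz
      apply hv
      funext i
      fin_cases i
      · exact hz
      · simpa [hz] using h0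
    have hquad : γ ^ 2 - 2 * α * γ + 1 = 0 := by
      rw [h0] at h1'
      have h2 : (γ ^ 2 - 2 * α * γ + 1) * v 0 = 0 := by linear_combination -h1'
      rcases mul_eq_zero.mp h2 with h | h
      · exact h
      · exact absurd h hv0
    have : (γ - (α + s)) * (γ - (α - s)) = 0 := by nlinarith
    rcases mul_eq_zero.mp this with h | h
    · exact Or.inl (by linarith)
    · exact Or.inr (by linarith)
  · intro hε
    rw [hα]
    have : Real.pi * ε / (Real.cos (Real.pi * q))^2 < 0 :=
      div_neg_of_neg_of_pos (by nlinarith [Real.pi_pos]) hc2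
    linarith
  · intro hε
    have hπ := Real.pi_pos
    have h2 : 2 < Real.pi * ε := by
      rw [div_lt_iff₀ hπ] at hε; linarith
    have hle : (Real.cos (Real.pi * q))^2 ≤ 1 := by
      nlinarith [Real.neg_one_le_cos (Real.pi * q), Real.cos_le_one (Real.pi * q)]
    have : 2 < Real.pi * ε / (Real.cos (Real.pi * q))^2 := by
      rw [lt_div_iff₀ hc2]; nlinarith
    rw [hα]; linarith
  · intro h; linarith
  · intro h
    have : α - s < -1 := by linarith
    rw [abs_of_neg (by linarith)]; linarith
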